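/- A finite subset τ ⊆ ℤ×ℤ is a connected skew shape if and only if τ is cornered and diagonal-convex. -/

import Mathlib

open Finset

abbrev Node : Type := ℤ × ℤ

/-- `v` is weakly southeast of `u` (product order). -/
def SE (u v : Node) : Prop := u.1 ≤ v.1 ∧ u.2 ≤ v.2

/-- `v` is weakly northeast of `u` (`u ↗ v`). -/
def NEr (u v : Node) : Prop := v.1 ≤ u.1 ∧ u.2 ≤ v.2

/-- `v` is strictly northeast of `u` (`u ⇗ v`). -/
def SNE (u v : Node) : Prop := v.1 < u.1 ∧ u.2 < v.2

def IsSkew (τ : Finset Node) : Prop :=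
  ∀ u ∈ τ, ∀ w ∈ τ, ∀ v : Node, SE u v → SE v w → v ∈ τ

def Adj (u v : Node) : Prop :=
  v = u + (1, 0) ∨ v = u + (-1, 0) ∨ v = u + (0, 1) ∨ v = u + (0, -1)

def PathIn (τ : Finset Node) (u v : Node) : Prop :=
  Relation.ReflTransGen (fun a b => a ∈ τ ∧ b ∈ τ ∧ Adj a b) u v

def IsConnectedShape (τ : Finset Node) : Prop :=
  ∀ u ∈ τ, ∀ v ∈ τ, PathIn τ u v

def Cornered (τ : Finset Node) : Prop :=
  (∀ u ∈ τ, ∀ u' ∈ τ, (u + (1, 0) ∉ τ ∧ u + (0, -1) ∉ τ) →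
      (u' + (1, 0) ∉ τ ∧ u' + (0, -1) ∉ τ) → u = u') ∧
  (∀ v ∈ τ, ∀ v' ∈ τ, (v + (-1, 0) ∉ τ ∧ v + (0, 1) ∉ τ) →
      (v' + (-1, 0) ∉ τ ∧ v' + (0, 1) ∉ τ) → v = v')

def DiagConvex (τ : Finset Node) : Prop :=
  ∀ u ∈ τ, ∀ w ∈ τ, ∀ v : Node,
    u.2 - u.1 = v.2 - v.1 → v.2 - v.1 = w.2 - w.1 → SE u v → SE v w → v ∈ τ

def Thin (τ : Finset Node) : Prop :=
  ∀ u ∈ τ, ∀ v ∈ τ, u.2 - u.1 = v.2 - v.1 → u = v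

def IsRibbon (ξ : Finset Node) : Prop :=
  ξ.Nonempty ∧ IsSkew ξ ∧ IsConnectedShape ξ ∧ Thin ξ

def MaxSW (τ : Finset Node) (u : Node) : Prop :=
  u ∈ τ ∧ ∀ v ∈ τ, NEr v u → v = u

def MaxNE (τ : Finset Node) (v : Node) : Prop :=
  v ∈ τ ∧ ∀ w ∈ τ, NEr v w → w = v

def IsNEPath (z : ℕ → Node) (k : ℕ) : Prop :=
  ∀ i, i + 1 < k → z (i + 1) = z i + (-1, 0) ∨ z (i + 1) = z i + (0, 1)

def IsSEPath (z : ℕ → Node) (k : ℕ) : Prop :=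
  ∀ i, i + 1 < k → z (i + 1) = z i + (1, 0) ∨ z (i + 1) = z i + (0, 1)

def SERemovable (τ μ : Finset Node) : Prop :=
  μ ⊆ τ ∧ ∀ u ∈ μ, ∀ v ∈ τ \ μ, ¬ SE u v

lemma add_fst (p q : Node) : (p + q).1 = p.1 + q.1 := rfl
lemma add_snd (p q : Node) : (p + q).2 = p.2 + q.2 := rfl
lemma mk_fst (a b : ℤ) : ((a, b) : Node).1 = a := rfl
lemma mk_snd (a b : ℤ) : ((a, b) : Node).2 = b := rfl

lemma add10 (p : Node) : p + (1,0) = (p.1 + 1, p.2) := by ext <;> simp <;> omega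
lemma addm10 (p : Node) : p + (-1,0) = (p.1 - 1, p.2) := by ext <;> simp <;> omega
lemma add01 (p : Node) : p + (0,1) = (p.1, p.2 + 1) := by ext <;> simp <;> omega
lemma add0m1 (p : Node) : p + (0,-1) = (p.1, p.2 - 1) := by ext <;> simp <;> omega

lemma adj_symm {a b : Node} (h : Adj a b) : Adj b a := by
  simp only [Adj, add10, addm10, add01, add0m1, Prod.ext_iff, mk_fst, mk_snd] at h ⊢
  omega

/-- Everything path-reachable from an SE corner lies weakly NW of it. -/
lemma quadSE (τ : Finset Node) (hs : IsSkew τ) (u : Node) (hu : u ∈ τ)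
    (h1 : u + (1,0) ∉ τ) (h2 : u + (0,-1) ∉ τ) :
    ∀ p, PathIn τ u p → p.1 ≤ u.1 ∧ u.2 ≤ p.2 := by
  intro p hp
  induction hp with
  | refl => exact ⟨le_refl _, le_refl _⟩
  | @tail b c _ hstep ih =>
    obtain ⟨hb, hc, hadj⟩ := hstep
    rcases hadj with h | h | h | h
    · rw [add10] at h
      have hc1 : c.1 = b.1 + 1 := by rw [h]
      have hc2 : c.2 = b.2 := by rw [h]
      by_cases hx : b.1 + 1 ≤ u.1
      · exact ⟨by omega, by omega⟩
      · exfalso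
        apply h1
        apply hs u hu c hc
        · rw [add10]
          constructor <;> simp only [mk_fst, mk_snd] <;> omega
        · rw [add10]
          constructor <;> simp only [mk_fst, mk_snd] <;> omega
    · rw [addm10] at h
      have hc1 : c.1 = b.1 - 1 := by rw [h]
      have hc2 : c.2 = b.2 := by rw [h]
      exact ⟨by omega, by omega⟩
    · rw [add01] at h
      have hc1 : c.1 = b.1 := by rw [h]
      have hc2 : c.2 = b.2 + 1 := by rw [h]
      exact ⟨by omega, by omega⟩
    · rw [add0m1] at h
      have hc1 : c.1 = b.1 := by rw [h]
      have hc2 : c.2 = b.2 - 1 := by rw [h]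
      by_cases hy : u.2 ≤ b.2 - 1
      · exact ⟨by omega, by omega⟩
      · exfalso
        apply h2
        apply hs c hc u hu
        · rw [add0m1]
          constructor <;> simp only [mk_fst, mk_snd] <;> omega
        · rw [add0m1]
          constructor <;> simp only [mk_fst, mk_snd] <;> omega

/-- Everything path-reachable from a NW corner lies weakly SE of it. -/
lemma quadNW (τ : Finset Node) (hs : IsSkew τ) (u : Node) (hu : u ∈ τ)
    (h1 : u + (-1,0) ∉ τ) (h2 : u + (0,1) ∉ τ) :
    ∀ p, PathIn τ u p → u.1 ≤ p.1 ∧ p.2 ≤ u.2 := by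
  intro p hp
  induction hp with
  | refl => exact ⟨le_refl _, le_refl _⟩
  | @tail b c _ hstep ih =>
    obtain ⟨hb, hc, hadj⟩ := hstep
    rcases hadj with h | h | h | h
    · rw [add10] at h
      have hc1 : c.1 = b.1 + 1 := by rw [h]
      have hc2 : c.2 = b.2 := by rw [h]
      exact ⟨by omega, by omega⟩
    · rw [addm10] at h
      have hc1 : c.1 = b.1 - 1 := by rw [h]
      have hc2 : c.2 = b.2 := by rw [h]
      by_cases hx : u.1 ≤ b.1 - 1
      · exact ⟨by omega, by omega⟩
      · exfalso
        apply h1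
        apply hs c hc u hu
        · rw [addm10]
          constructor <;> simp only [mk_fst, mk_snd] <;> omega
        · rw [addm10]
          constructor <;> simp only [mk_fst, mk_snd] <;> omega
    · rw [add01] at h
      have hc1 : c.1 = b.1 := by rw [h]
      have hc2 : c.2 = b.2 + 1 := by rw [h]
      by_cases hy : b.2 + 1 ≤ u.2
      · exact ⟨by omega, by omega⟩
      · exfalso
        apply h2
        apply hs u hu c hc
        · rw [add01]
          constructor <;> simp only [mk_fst, mk_snd] <;> omega
        · rw [add01]
          constructor <;> simp only [mk_fst, mk_snd] <;> omega
    · rw [add0m1] at h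
      have hc1 : c.1 = b.1 := by rw [h]
      have hc2 : c.2 = b.2 - 1 := by rw [h]
      exact ⟨by omega, by omega⟩

lemma reverse_dir (τ : Finset Node) (hC : Cornered τ) (hD : DiagConvex τ) :
    IsSkew τ ∧ IsConnectedShape τ := by
  rcases τ.eq_empty_or_nonempty with rfl | hne
  · constructor
    · intro u hu; exact absurd hu (Finset.notMem_empty u)
    · intro u hu; exact absurd hu (Finset.notMem_empty u)
  obtain ⟨c0, hc0, hmax0⟩ := τ.exists_max_image (fun p => p.1 - p.2) hne
  obtain ⟨c1, hc1, hmax1⟩ := τ.exists_max_image (fun p => p.2 - p.1) hne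
  have hM0 : ∀ p ∈ τ, p.1 - p.2 ≤ c0.1 - c0.2 := fun p hp => hmax0 p hp
  have hM1 : ∀ p ∈ τ, p.2 - p.1 ≤ c1.2 - c1.1 := fun p hp => hmax1 p hp
  have hc0a : c0 + (1,0) ∉ τ := by
    intro h
    have := hM0 _ h
    rw [add10] at this
    simp only [mk_fst, mk_snd] at this
    omega
  have hc0b : c0 + (0,-1) ∉ τ := by
    intro h
    have := hM0 _ h
    rw [add0m1] at this
    simp only [mk_fst, mk_snd] at this
    omega
  have hc1a : c1 + (-1,0) ∉ τ := by
    intro h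
    have := hM1 _ h
    rw [addm10] at this
    simp only [mk_fst, mk_snd] at this
    omega
  have hc1b : c1 + (0,1) ∉ τ := by
    intro h
    have := hM1 _ h
    rw [add01] at this
    simp only [mk_fst, mk_snd] at this
    omega
  have K0 : ∀ p ∈ τ, p ≠ c0 → p + (1,0) ∈ τ ∨ p + (0,-1) ∈ τ := by
    intro p hp hne'
    by_contra hcon
    push_neg at hcon
    exact hne' (hC.1 p hp c0 hc0 ⟨hcon.1, hcon.2⟩ ⟨hc0a, hc0b⟩)
  have K1 : ∀ p ∈ τ, p ≠ c1 → p + (-1,0) ∈ τ ∨ p + (0,1) ∈ τ := by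
    intro p hp hne'
    by_contra hcon
    push_neg at hcon
    exact hne' (hC.2 p hp c1 hc1 ⟨hcon.1, hcon.2⟩ ⟨hc1a, hc1b⟩)
  have Bot : ∀ p ∈ τ, p.2 - p.1 = c0.2 - c0.1 → p = c0 := by
    intro p hp hd
    refine hC.1 p hp c0 hc0 ⟨?_, ?_⟩ ⟨hc0a, hc0b⟩
    · intro h
      have := hM0 _ h
      rw [add10] at this
      simp only [mk_fst, mk_snd] at this
      omega
    · intro h
      have := hM0 _ h
      rw [add0m1] at this
      simp only [mk_fst, mk_snd] at this
      omega
  have Top : ∀ p ∈ τ, p.2 - p.1 = c1.2 - c1.1 → p = c1 := by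
    intro p hp hd
    refine hC.2 p hp c1 hc1 ⟨?_, ?_⟩ ⟨hc1a, hc1b⟩
    · intro h
      have := hM1 _ h
      rw [addm10] at this
      simp only [mk_fst, mk_snd] at this
      omega
    · intro h
      have := hM1 _ h
      rw [add01] at this
      simp only [mk_fst, mk_snd] at this
      omega
  have LemSE : ∀ k : ℕ, ∀ p ∈ τ, c0.2 - c0.1 + k ≤ p.2 - p.1 →
      ∃ t ∈ τ, t.2 - t.1 + k = p.2 - p.1 ∧ p.1 ≤ t.1 ∧ t.2 ≤ p.2 := by
    intro k
    induction k with
    | zero =>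
      intro p hp _
      exact ⟨p, hp, by push_cast; ring, le_refl _, le_refl _⟩
    | succ k ih =>
      intro p hp hk
      push_cast at hk
      have hpne : p ≠ c0 := by
        intro h
        rw [h] at hk
        omega
      rcases K0 p hp hpne with hq | hq
      · rw [add10] at hq
        obtain ⟨t, ht, h1, h2, h3⟩ := ih (p.1 + 1, p.2) hq
          (by simp only [mk_fst, mk_snd]; omega)
        simp only [mk_fst, mk_snd] at h1 h2 h3
        exact ⟨t, ht, by push_cast at h1 ⊢; omega, by omega, by omega⟩
      · rw [add0m1] at hq
        obtain ⟨t, ht, h1, h2, h3⟩ := ih (p.1, p.2 - 1) hq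
          (by simp only [mk_fst, mk_snd]; omega)
        simp only [mk_fst, mk_snd] at h1 h2 h3
        exact ⟨t, ht, by push_cast at h1 ⊢; omega, by omega, by omega⟩
  have LemNW : ∀ k : ℕ, ∀ p ∈ τ, p.2 - p.1 + k ≤ c1.2 - c1.1 →
      ∃ t ∈ τ, t.2 - t.1 = p.2 - p.1 + k ∧ t.1 ≤ p.1 ∧ p.2 ≤ t.2 := by
    intro k
    induction k with
    | zero =>
      intro p hp _
      exact ⟨p, hp, by push_cast; ring, le_refl _, le_refl _⟩
    | succ k ih =>
      intro p hp hk
      push_cast at hk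
      have hpne : p ≠ c1 := by
        intro h
        rw [h] at hk
        omega
      rcases K1 p hp hpne with hq | hq
      · rw [addm10] at hq
        obtain ⟨t, ht, h1, h2, h3⟩ := ih (p.1 - 1, p.2) hq
          (by simp only [mk_fst, mk_snd]; omega)
        simp only [mk_fst, mk_snd] at h1 h2 h3
        exact ⟨t, ht, by push_cast at h1 ⊢; omega, by omega, by omega⟩
      · rw [add01] at hq
        obtain ⟨t, ht, h1, h2, h3⟩ := ih (p.1, p.2 + 1) hq
          (by simp only [mk_fst, mk_snd]; omega)
        simp only [mk_fst, mk_snd] at h1 h2 h3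
        exact ⟨t, ht, by push_cast at h1 ⊢; omega, by omega, by omega⟩
  have G0 : ∀ p ∈ τ, p.1 ≤ c0.1 ∧ c0.2 ≤ p.2 := by
    intro p hp
    have hd : c0.2 - c0.1 ≤ p.2 - p.1 := by have := hM0 p hp; omega
    have hcast : (((p.2 - p.1) - (c0.2 - c0.1)).toNat : ℤ) = (p.2 - p.1) - (c0.2 - c0.1) :=
      Int.toNat_of_nonneg (by omega)
    obtain ⟨t, ht, h1, h2, h3⟩ := LemSE ((p.2 - p.1) - (c0.2 - c0.1)).toNat p hp (by omega)
    have : t = c0 := Bot t ht (by omega)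
    rw [this] at h2 h3
    exact ⟨h2, h3⟩
  have G1 : ∀ p ∈ τ, c1.1 ≤ p.1 ∧ p.2 ≤ c1.2 := by
    intro p hp
    have hd : p.2 - p.1 ≤ c1.2 - c1.1 := by have := hM1 p hp; omega
    have hcast : (((c1.2 - c1.1) - (p.2 - p.1)).toNat : ℤ) = (c1.2 - c1.1) - (p.2 - p.1) :=
      Int.toNat_of_nonneg (by omega)
    obtain ⟨t, ht, h1, h2, h3⟩ := LemNW ((c1.2 - c1.1) - (p.2 - p.1)).toNat p hp (by omega)
    have : t = c1 := Top t ht (by omega)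
    rw [this] at h2 h3
    exact ⟨h2, h3⟩
  have hskew : IsSkew τ := by
    intro u hu w hw v huv hvw
    obtain ⟨huv1, huv2⟩ := huv
    obtain ⟨hvw1, hvw2⟩ := hvw
    have hg0u := G0 u hu
    have hg0w := G0 w hw
    have hg1u := G1 u hu
    have hg1w := G1 w hw
    have hA : ∃ t ∈ τ, t.2 - t.1 = v.2 - v.1 ∧ t.1 ≤ v.1 := by
      by_cases hcmp : u.2 - u.1 ≤ v.2 - v.1
      · have hcast : (((v.2 - v.1) - (u.2 - u.1)).toNat : ℤ) = (v.2 - v.1) - (u.2 - u.1) :=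
          Int.toNat_of_nonneg (by omega)
        obtain ⟨t, ht, h1, h2, h3⟩ := LemNW ((v.2 - v.1) - (u.2 - u.1)).toNat u hu (by omega)
        exact ⟨t, ht, by omega, by omega⟩
      · have hcast : (((u.2 - u.1) - (v.2 - v.1)).toNat : ℤ) = (u.2 - u.1) - (v.2 - v.1) :=
          Int.toNat_of_nonneg (by omega)
        obtain ⟨t, ht, h1, h2, h3⟩ := LemSE ((u.2 - u.1) - (v.2 - v.1)).toNat u hu (by omega)
        exact ⟨t, ht, by omega, by omega⟩
    have hB : ∃ s ∈ τ, s.2 - s.1 = v.2 - v.1 ∧ v.1 ≤ s.1 := by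
      by_cases hcmp : v.2 - v.1 ≤ w.2 - w.1
      · have hcast : (((w.2 - w.1) - (v.2 - v.1)).toNat : ℤ) = (w.2 - w.1) - (v.2 - v.1) :=
          Int.toNat_of_nonneg (by omega)
        obtain ⟨t, ht, h1, h2, h3⟩ := LemSE ((w.2 - w.1) - (v.2 - v.1)).toNat w hw (by omega)
        exact ⟨t, ht, by omega, by omega⟩
      · have hcast : (((v.2 - v.1) - (w.2 - w.1)).toNat : ℤ) = (v.2 - v.1) - (w.2 - w.1) :=
          Int.toNat_of_nonneg (by omega)
        obtain ⟨t, ht, h1, h2, h3⟩ := LemNW ((v.2 - v.1) - (w.2 - w.1)).toNat w hw (by omega)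
        exact ⟨t, ht, by omega, by omega⟩
    obtain ⟨t, ht, htd, ht1⟩ := hA
    obtain ⟨s, hs, hsd, hs1⟩ := hB
    exact hD t ht s hs v (by omega) (by omega) ⟨ht1, by omega⟩ ⟨hs1, by omega⟩
  have hto0 : ∀ k : ℕ, ∀ p ∈ τ, p.2 - p.1 ≤ c0.2 - c0.1 + k → PathIn τ p c0 := by
    intro k
    induction k with
    | zero =>
      intro p hp hk
      push_cast at hk
      have hd : c0.2 - c0.1 ≤ p.2 - p.1 := by have := hM0 p hp; omega
      have : p = c0 := Bot p hp (by omega)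
      rw [this]
      exact Relation.ReflTransGen.refl
    | succ k ih =>
      intro p hp hk
      push_cast at hk
      by_cases hpc : p = c0
      · rw [hpc]
        exact Relation.ReflTransGen.refl
      · rcases K0 p hp hpc with hq | hq
        · refine Relation.ReflTransGen.head ⟨hp, hq, Or.inl rfl⟩ ?_
          rw [add10] at hq ⊢
          exact ih _ hq (by simp only [mk_fst, mk_snd]; omega)
        · refine Relation.ReflTransGen.head ⟨hp, hq, Or.inr (Or.inr (Or.inr rfl))⟩ ?_
          rw [add0m1] at hq ⊢
          exact ih _ hq (by simp only [mk_fst, mk_snd]; omega)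
  have hto0' : ∀ p ∈ τ, PathIn τ p c0 := by
    intro p hp
    have := Int.self_le_toNat (p.2 - p.1 - (c0.2 - c0.1))
    exact hto0 (p.2 - p.1 - (c0.2 - c0.1)).toNat p hp (by omega)
  refine ⟨hskew, ?_⟩
  intro u hu v hv
  have hsym : Symmetric (fun a b : Node => a ∈ τ ∧ b ∈ τ ∧ Adj a b) := by
    rintro a b ⟨ha, hb, hadj⟩
    exact ⟨hb, ha, adj_symm hadj⟩
  exact (hto0' u hu).trans (by haveI : Std.Symm (fun a b : Node => a ∈ τ ∧ b ∈ τ ∧ Adj a b) := ⟨fun a b h => hsym h⟩; exact Relation.ReflTransGen.stdSymm.symm _ _ (hto0' v hv))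

theorem stmt1 (τ : Finset Node) :
    (IsSkew τ ∧ IsConnectedShape τ) ↔ (Cornered τ ∧ DiagConvex τ) := by
  constructor
  · rintro ⟨hs, hconn⟩
    refine ⟨⟨?_, ?_⟩, ?_⟩
    · rintro u hu u' hu' ⟨h1, h2⟩ ⟨h1', h2'⟩
      have A := quadSE τ hs u hu h1 h2 u' (hconn u hu u' hu')
      have B := quadSE τ hs u' hu' h1' h2' u (hconn u' hu' u hu)
      ext <;> omega
    · rintro u hu u' hu' ⟨h1, h2⟩ ⟨h1', h2'⟩
      have A := quadNW τ hs u hu h1 h2 u' (hconn u hu u' hu')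
      have B := quadNW τ hs u' hu' h1' h2' u (hconn u' hu' u hu)
      ext <;> omega
    · intro u hu w hw v _ _ huv hvw
      exact hs u hu w hw v huv hvw
  · rintro ⟨hC, hD⟩
    exact reverse_dir τ hC hD
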